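/- With the setup of the previous theorem, among all optimal pairs (ρ,η) ∈ S* = {(ρ,η) : ρ ∈ [λₙ, λ_{q+1}], η = 2ρ/(λ_{q+1}+λₙ)}, the choice (ρ*, 1) with ρ* = (λ_{q+1}+λₙ)/2 minimizes the estimation error: for every vector z and every (ρ,η) ∈ S*, ‖(I − Ĥ(ρ*,q)^{-1}H)z‖ ≤ ‖(I − η Ĥ(ρ,q)^{-1}H)z‖. -/
import Mathlib


open scoped RealInnerProductSpace

/-- Rank-one projection `x ↦ ⟪v, x⟫ • v`. -/
noncomputable def projCL {n : ℕ} (v : EuclideanSpace ℝ (Fin n)) :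
    EuclideanSpace ℝ (Fin n) →L[ℝ] EuclideanSpace ℝ (Fin n) :=
  (innerSL ℝ v).smulRight v

/-- The approximation `Ĥ(ρ,q)` keeping the top `q` eigenpairs and replacing the
remaining eigenvalues by `ρ`. -/
noncomputable def hatH {n : ℕ} (v : OrthonormalBasis (Fin n) ℝ (EuclideanSpace ℝ (Fin n)))
    (lam : Fin n → ℝ) (q : ℕ) (ρ : ℝ) :
    EuclideanSpace ℝ (Fin n) →L[ℝ] EuclideanSpace ℝ (Fin n) :=
  ∑ k : Fin n, (if (k : ℕ) < q then lam k else ρ) • projCL (v k)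

/-- The inverse of `Ĥ(ρ,q)`. -/
noncomputable def hatHinv {n : ℕ} (v : OrthonormalBasis (Fin n) ℝ (EuclideanSpace ℝ (Fin n)))
    (lam : Fin n → ℝ) (q : ℕ) (ρ : ℝ) :
    EuclideanSpace ℝ (Fin n) →L[ℝ] EuclideanSpace ℝ (Fin n) :=
  ∑ k : Fin n, (if (k : ℕ) < q then (lam k)⁻¹ else ρ⁻¹) • projCL (v k)

/-- Iteration matrix `I − η Ĥ(ρ,q)⁻¹ H`. -/
noncomputable def iterMat {n : ℕ} (H : EuclideanSpace ℝ (Fin n) →L[ℝ] EuclideanSpace ℝ (Fin n))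
    (v : OrthonormalBasis (Fin n) ℝ (EuclideanSpace ℝ (Fin n)))
    (lam : Fin n → ℝ) (q : ℕ) (ρ η : ℝ) :
    EuclideanSpace ℝ (Fin n) →L[ℝ] EuclideanSpace ℝ (Fin n) :=
  ContinuousLinearMap.id ℝ _ - η • ((hatHinv v lam q ρ).comp H)

/-- Expansion of the iteration matrix in the eigenbasis. -/
lemma iterMat_apply_eq {n : ℕ}
    (H : EuclideanSpace ℝ (Fin n) →L[ℝ] EuclideanSpace ℝ (Fin n))
    (v : OrthonormalBasis (Fin n) ℝ (EuclideanSpace ℝ (Fin n)))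
    (lam : Fin n → ℝ) (q : ℕ) (ρ η : ℝ)
    (hH : ∀ k, H (v k) = lam k • v k)
    (z : EuclideanSpace ℝ (Fin n)) :
    iterMat H v lam q ρ η z =
      ∑ k : Fin n, ((1 - η * (if (k : ℕ) < q then (lam k)⁻¹ else ρ⁻¹) * lam k) * ⟪v k, z⟫) • v k := by
  have hz : H z = ∑ k : Fin n, (lam k * ⟪v k, z⟫) • v k := by
    conv_lhs => rw [← v.sum_repr' z]
    rw [map_sum]
    refine Finset.sum_congr rfl fun k _ => ?_
    rw [map_smul, hH k, smul_smul, mul_comm]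
  have hinner : ∀ k : Fin n, ⟪v k, H z⟫ = lam k * ⟪v k, z⟫ := by
    intro k
    rw [hz, v.orthonormal.inner_right_fintype (fun j => lam j * ⟪v j, z⟫) k]
  simp only [iterMat, hatHinv, ContinuousLinearMap.sub_apply, ContinuousLinearMap.id_apply,
    ContinuousLinearMap.smul_apply, ContinuousLinearMap.comp_apply,
    ContinuousLinearMap.sum_apply, projCL, ContinuousLinearMap.smulRight_apply, innerSL_apply_apply]
  simp only [hinner]
  rw [Finset.smul_sum]
  nth_rw 1 [← v.sum_repr' z]
  rw [← Finset.sum_sub_distrib]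
  refine Finset.sum_congr rfl fun k _ => ?_
  simp only [smul_smul]
  rw [← sub_smul]
  ring_nf

/-- Norm squared of a linear combination of the orthonormal basis. -/
lemma norm_sq_sum {n : ℕ} (v : OrthonormalBasis (Fin n) ℝ (EuclideanSpace ℝ (Fin n)))
    (c : Fin n → ℝ) :
    ‖∑ k : Fin n, c k • v k‖ ^ 2 = ∑ k : Fin n, (c k) ^ 2 := by
  rw [← real_inner_self_eq_norm_sq]
  rw [v.orthonormal.inner_sum c c]
  simp [RCLike.conj_to_real, sq]

/-- among optimal pairs `(ρ,η) ∈ S*`, the choice `(ρ*, 1)` minimizes the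
estimation error for every vector `z`. -/
theorem stmt2 (n q : ℕ) (hq : q ≤ n)
    (H : EuclideanSpace ℝ (Fin (n + 1)) →L[ℝ] EuclideanSpace ℝ (Fin (n + 1)))
    (v : OrthonormalBasis (Fin (n + 1)) ℝ (EuclideanSpace ℝ (Fin (n + 1))))
    (lam : Fin (n + 1) → ℝ)
    (hmono : ∀ i j : Fin (n + 1), i ≤ j → lam j ≤ lam i)
    (hpos : ∀ i, 0 < lam i)
    (hH : ∀ k, H (v k) = lam k • v k) :
    ∀ (z : EuclideanSpace ℝ (Fin (n + 1))) (ρ η : ℝ),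
      lam (Fin.last n) ≤ ρ → ρ ≤ lam ⟨q, Nat.lt_succ_of_le hq⟩ →
      η = 2 * ρ / (lam ⟨q, Nat.lt_succ_of_le hq⟩ + lam (Fin.last n)) →
      ‖iterMat H v lam q ((lam ⟨q, Nat.lt_succ_of_le hq⟩ + lam (Fin.last n)) / 2) 1 z‖ ≤
        ‖iterMat H v lam q ρ η z‖ := by
  intro z ρ η hρ1 hρ2 hη
  set lq : ℝ := lam ⟨q, Nat.lt_succ_of_le hq⟩
  set ln : ℝ := lam (Fin.last n)
  have hlq : 0 < lq := hpos _
  have hln : 0 < ln := hpos _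
  have hsum : (0:ℝ) < lq + ln := by linarith
  have hρpos : 0 < ρ := lt_of_lt_of_le hln hρ1
  set ρs : ℝ := (lq + ln) / 2 with hρs
  have hρspos : 0 < ρs := by positivity
  -- coefficient functions
  set a : Fin (n+1) → ℝ := fun k =>
    (1 - 1 * (if (k : ℕ) < q then (lam k)⁻¹ else ρs⁻¹) * lam k) * ⟪v k, z⟫ with ha
  set b : Fin (n+1) → ℝ := fun k =>
    (1 - η * (if (k : ℕ) < q then (lam k)⁻¹ else ρ⁻¹) * lam k) * ⟪v k, z⟫ with hb
  rw [iterMat_apply_eq H v lam q ρs 1 hH z, iterMat_apply_eq H v lam q ρ η hH z]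
  have hterm : ∀ k : Fin (n+1), (a k) ^ 2 ≤ (b k) ^ 2 := by
    intro k
    by_cases hk : (k : ℕ) < q
    · have : a k = 0 := by
        simp only [ha, hk, if_true, one_mul, inv_mul_cancel₀ (hpos k).ne', sub_self, zero_mul]
      rw [this]
      simpa using sq_nonneg (b k)
    · have hcoef : η * ρ⁻¹ = ρs⁻¹ := by
        rw [hη]
        field_simp [hρs]
        ring
      simp only [ha, hb, hk, if_false]
      rw [one_mul, ← hcoef]
  have hsq : ‖∑ k : Fin (n+1), a k • v k‖ ^ 2 ≤ ‖∑ k : Fin (n+1), b k • v k‖ ^ 2 := by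
    rw [norm_sq_sum, norm_sq_sum]
    exact Finset.sum_le_sum fun k _ => hterm k
  have h1 := norm_nonneg (∑ k : Fin (n+1), a k • v k)
  have h2 := norm_nonneg (∑ k : Fin (n+1), b k • v k)
  nlinarith [hsq]
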